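/- arXiv:2208.03406 — 2 statements merged into one kernel-verified Lean document; each statement's English description precedes it below -/
import Mathlib

section
/- Suppose a mixed strategy profile x and reals ū^i, u^i_s, r^i_s, f^i_s, b^i_s ∈ {0,1} (for all players i and s ∈ S_i) satisfy the MIMLP2 constraints — u^i_s = u_i(s, x), ū^i ≥ u^i_s, r^i_s = ū^i − u^i_s, r^i_s ≥ 0, x^i(s) ≤ 1 − b^i_s, f^i_s ≥ r^i_s, f^i_s ≥ U^i b^i_s — and the objective value ∑_{i=1}^n ∑_{s∈S_i} (f^i_s − U^i b^i_s) equals 0. Then x is a Nash equilibrium. -/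
open Finset

/-- Expected payoff `U_i(x)` of player `i` under the mixed strategy profile `x`. -/
def expPayoff {n : ℕ} {S : Fin n → Type} [∀ i, Fintype (S i)]
    (A : Fin n → (∀ j, S j) → ℝ) (x : ∀ i, S i → ℝ) (i : Fin n) : ℝ :=
  ∑ t : ∀ j, S j, A i t * ∏ j, x j (t j)

/-- Expected payoff `u_i(s, x)` of player `i` playing the pure strategy `s` while the
other players play their mixed strategies from `x`: summing over full pure profiles `t`
with `t i = s` is the same as summing over tuples `ŝ` of pure strategies of the others. -/
def purePayoff {n : ℕ} {S : Fin n → Type} [∀ i, Fintype (S i)] [∀ i, DecidableEq (S i)]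
    (A : Fin n → (∀ j, S j) → ℝ) (x : ∀ i, S i → ℝ) (i : Fin n) (s : S i) : ℝ :=
  ∑ t : ∀ j, S j, if t i = s then A i t * ∏ j ∈ Finset.univ.erase i, x j (t j) else 0

/-- `U^i`: the maximum difference of any two payoffs of player `i`. -/
noncomputable def payoffRange {n : ℕ} {S : Fin n → Type} [∀ i, Fintype (S i)]
    [∀ i, Nonempty (S i)] (A : Fin n → (∀ j, S j) → ℝ) (i : Fin n) : ℝ :=
  Finset.univ.sup' Finset.univ_nonempty (A i) - Finset.univ.inf' Finset.univ_nonempty (A i)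


private lemma expPayoff_update_eq {n : ℕ} {S : Fin n → Type} [∀ i, Fintype (S i)]
    [∀ i, DecidableEq (S i)]
    (A : Fin n → (∀ j, S j) → ℝ) (x : ∀ i, S i → ℝ) (i : Fin n) (y : S i → ℝ) :
    expPayoff A (Function.update x i y) i = ∑ s, y s * purePayoff A x i s := by
  unfold expPayoff purePayoff
  have h : ∀ t : ∀ j, S j,
      A i t * ∏ j, Function.update x i y j (t j)
        = y (t i) * (A i t * ∏ j ∈ Finset.univ.erase i, x j (t j)) := by
    intro t
    rw [← Finset.mul_prod_erase Finset.univ _ (Finset.mem_univ i)]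
    have : ∀ j ∈ Finset.univ.erase i, Function.update x i y j (t j) = x j (t j) := by
      intro j hj
      rw [Function.update_of_ne (Finset.ne_of_mem_erase hj)]
    rw [Finset.prod_congr rfl this, Function.update_self]
    ring
  simp_rw [h, Finset.mul_sum, mul_ite, mul_zero]
  rw [Finset.sum_comm]
  apply Finset.sum_congr rfl
  intro t _
  rw [Finset.sum_ite_eq Finset.univ (t i)
    (fun s => y s * (A i t * ∏ j ∈ Finset.univ.erase i, x j (t j)))]
  simp

/-- If the mixed strategy profile `x` together with `ū^i`, `u^i_s`,
`r^i_s`, `f^i_s` and binary `b^i_s` satisfies the MIMLP2 constraints with objective value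
`∑ᵢ ∑_{s ∈ S_i} (f^i_s − U^i b^i_s) = 0`, then `x` is a Nash equilibrium. -/
theorem mimlp2_optimal_gives_nash
    (n : ℕ) (hn : 2 ≤ n) (S : Fin n → Type)
    [∀ i, Fintype (S i)] [∀ i, Nonempty (S i)] [∀ i, DecidableEq (S i)]
    (A : Fin n → (∀ j, S j) → ℝ)
    (x : ∀ i, S i → ℝ)
    (hx0 : ∀ i s, 0 ≤ x i s) (hx1 : ∀ i, ∑ s, x i s = 1)
    (ubar : Fin n → ℝ) (u r f b : ∀ i, S i → ℝ)
    (hfeas : ∀ (i : Fin n) (s : S i),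
        (b i s = 0 ∨ b i s = 1) ∧
        u i s = purePayoff A x i s ∧
        u i s ≤ ubar i ∧
        r i s = ubar i - u i s ∧
        0 ≤ r i s ∧
        x i s ≤ 1 - b i s ∧
        r i s ≤ f i s ∧
        payoffRange A i * b i s ≤ f i s)
    (hobj : ∑ i, ∑ s, (f i s - payoffRange A i * b i s) = 0) :
    ∀ (i : Fin n) (y : S i → ℝ), (∀ s, 0 ≤ y s) → ∑ s, y s = 1 →
      expPayoff A (Function.update x i y) i ≤ expPayoff A x i := by
  
  intro i y hy0 hy1
  -- each objective term vanishes
  have hterm : ∀ (j : Fin n) (s : S j), f j s = payoffRange A j * b j s := by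
    intro j s
    have h1 : ∀ j ∈ (Finset.univ : Finset (Fin n)),
        0 ≤ ∑ s, (f j s - payoffRange A j * b j s) := by
      intro j _
      exact Finset.sum_nonneg fun s _ => sub_nonneg.mpr (hfeas j s).2.2.2.2.2.2.2
    have h2 := (Finset.sum_eq_zero_iff_of_nonneg h1).mp hobj j (Finset.mem_univ j)
    have h3 : ∀ s ∈ (Finset.univ : Finset (S j)),
        0 ≤ f j s - payoffRange A j * b j s :=
      fun s _ => sub_nonneg.mpr (hfeas j s).2.2.2.2.2.2.2
    have h4 := (Finset.sum_eq_zero_iff_of_nonneg h3).mp h2 s (Finset.mem_univ s)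
    linarith
  -- x i s * ubar i = x i s * u i s
  have hxeq : ∀ s : S i, x i s * ubar i = x i s * purePayoff A x i s := by
    intro s
    obtain ⟨hb, hu, hub, hr, hr0, hxb, hrf, hUf⟩ := hfeas i s
    rcases hb with hb0 | hb1
    · have hf : f i s = 0 := by rw [hterm i s, hb0, mul_zero]
      have : r i s = 0 := le_antisymm (by rw [← hf]; exact hrf) hr0
      have : purePayoff A x i s = ubar i := by rw [← hu]; linarith [hr ▸ this]
      rw [this]
    · have hx : x i s = 0 := le_antisymm (by rw [hb1] at hxb; linarith) (hx0 i s)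
      rw [hx, zero_mul, zero_mul]
  have hpure_le : ∀ s : S i, purePayoff A x i s ≤ ubar i := by
    intro s
    obtain ⟨_, hu, hub, _⟩ := hfeas i s
    rw [← hu]; exact hub
  have hx_exp : expPayoff A x i = ubar i := by
    have := expPayoff_update_eq A x i (x i)
    rw [Function.update_eq_self] at this
    rw [this]
    calc ∑ s, x i s * purePayoff A x i s = ∑ s, x i s * ubar i := by
          exact Finset.sum_congr rfl fun s _ => (hxeq s).symm
      _ = ubar i := by rw [← Finset.sum_mul, hx1 i, one_mul]
  rw [hx_exp, expPayoff_update_eq A x i y]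
  calc ∑ s, y s * purePayoff A x i s ≤ ∑ s, y s * ubar i :=
        Finset.sum_le_sum fun s _ => mul_le_mul_of_nonneg_left (hpure_le s) (hy0 s)
    _ = ubar i := by rw [← Finset.sum_mul, hy1, one_mul]
end

section
/- If the mixed strategy profile x = (x^1,…,x^n) is a Nash equilibrium, then there exist reals ū^i, u^i_s, r^i_s, g^i_s and b^i_s ∈ {0,1} (for all players i and s ∈ S_i) satisfying the MIMLP3 constraints — u^i_s = u_i(s, x), ū^i ≥ u^i_s, r^i_s = ū^i − u^i_s, r^i_s ≥ 0, r^i_s ≤ U^i b^i_s, g^i_s ≥ x^i(s), g^i_s ≥ 1 − b^i_s — whose objective value ∑_{i=1}^n ∑_{s∈S_i} (g^i_s − (1 − b^i_s)) equals 0. -/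
open Finset

section helpers
set_option linter.unusedSectionVars false
variable {n : ℕ} {S : Fin n → Type} [∀ i, Fintype (S i)] [∀ i, DecidableEq (S i)]

lemma sum_prod_pi (z : ∀ j, S j → ℝ) :
    ∑ t : ∀ j, S j, ∏ j, z j (t j) = ∏ j, ∑ a, z j a := by
  rw [Finset.prod_univ_sum]; simp

lemma weight_sum (x : ∀ i, S i → ℝ) (hx1 : ∀ i, ∑ s, x i s = 1) (i : Fin n) (s : S i) :
    ∑ t : ∀ j, S j, (if t i = s then ∏ j ∈ Finset.univ.erase i, x j (t j) else 0) = 1 := by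
  have key : ∀ t : ∀ j, S j,
      (if t i = s then ∏ j ∈ Finset.univ.erase i, x j (t j) else 0)
      = ∏ j, (Function.update x i (fun a => if a = s then (1:ℝ) else 0)) j (t j) := by
    intro t
    by_cases h : t i = s
    · rw [if_pos h, ← Finset.mul_prod_erase Finset.univ _ (Finset.mem_univ i)]
      rw [Function.update_self, if_pos h, one_mul]
      exact Finset.prod_congr rfl fun j hj => by
        simp [Function.update_of_ne (Finset.ne_of_mem_erase hj)]
    · rw [if_neg h]
      symm
      apply Finset.prod_eq_zero (Finset.mem_univ i)
      simp [h]
  simp_rw [key, sum_prod_pi]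
  apply Finset.prod_eq_one
  intro j _
  by_cases hj : j = i
  · subst hj; simp [Function.update_self]
  · rw [Function.update_of_ne hj]; exact hx1 j

lemma full_weight_sum (x : ∀ i, S i → ℝ) (hx1 : ∀ i, ∑ s, x i s = 1) :
    ∑ t : ∀ j, S j, ∏ j, x j (t j) = 1 := by
  rw [sum_prod_pi]
  exact Finset.prod_eq_one fun j _ => hx1 j

lemma expPayoff_eq_sum (A : Fin n → (∀ j, S j) → ℝ) (x : ∀ i, S i → ℝ) (i : Fin n) :
    expPayoff A x i = ∑ s, x i s * purePayoff A x i s := by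
  unfold expPayoff purePayoff
  simp_rw [Finset.mul_sum, mul_ite, mul_zero]
  rw [Finset.sum_comm]
  apply Finset.sum_congr rfl
  intro t _
  rw [Finset.sum_congr rfl (g := fun s => if t i = s then x i (t i) * (A i t * ∏ j ∈ Finset.univ.erase i, x j (t j)) else 0)
      (fun s _ => by split <;> simp_all)]
  rw [Finset.sum_ite_eq Finset.univ (t i) _]
  simp only [Finset.mem_univ, if_pos]
  rw [← Finset.mul_prod_erase Finset.univ (fun j => x j (t j)) (Finset.mem_univ i)]
  ring

lemma expPayoff_update (A : Fin n → (∀ j, S j) → ℝ) (x : ∀ i, S i → ℝ) (i : Fin n)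
    (y : S i → ℝ) :
    expPayoff A (Function.update x i y) i = ∑ s, y s * purePayoff A x i s := by
  have key : ∀ t : ∀ j, S j,
      ∏ j, (Function.update x i y) j (t j)
      = y (t i) * ∏ j ∈ Finset.univ.erase i, x j (t j) := by
    intro t
    rw [← Finset.mul_prod_erase Finset.univ _ (Finset.mem_univ i), Function.update_self]
    congr 1
    exact Finset.prod_congr rfl fun j hj => by
      simp [Function.update_of_ne (Finset.ne_of_mem_erase hj)]
  unfold expPayoff purePayoff
  simp_rw [key, Finset.mul_sum, mul_ite, mul_zero]
  rw [Finset.sum_comm]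
  apply Finset.sum_congr rfl
  intro t _
  rw [Finset.sum_congr rfl (g := fun s => if t i = s then y (t i) * (A i t * ∏ j ∈ Finset.univ.erase i, x j (t j)) else 0)
      (fun s _ => by split <;> simp_all)]
  rw [Finset.sum_ite_eq Finset.univ (t i) _]
  simp only [Finset.mem_univ, if_pos]
  ring

lemma purePayoff_eq (A : Fin n → (∀ j, S j) → ℝ) (x : ∀ i, S i → ℝ) (i : Fin n) (s : S i) :
    purePayoff A x i s
    = ∑ t : ∀ j, S j, A i t * (if t i = s then ∏ j ∈ Finset.univ.erase i, x j (t j) else 0) := by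
  unfold purePayoff
  exact Finset.sum_congr rfl fun t _ => by split <;> simp

variable [∀ i, Nonempty (S i)]

lemma combo_le_sup (A : Fin n → (∀ j, S j) → ℝ) (i : Fin n) (w : (∀ j, S j) → ℝ)
    (hw0 : ∀ t, 0 ≤ w t) (hw1 : ∑ t, w t = 1) :
    ∑ t, A i t * w t ≤ Finset.univ.sup' Finset.univ_nonempty (A i) := by
  calc ∑ t, A i t * w t
      ≤ ∑ t, Finset.univ.sup' Finset.univ_nonempty (A i) * w t :=
        Finset.sum_le_sum fun t _ =>
          mul_le_mul_of_nonneg_right (Finset.le_sup' (A i) (Finset.mem_univ t)) (hw0 t)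
    _ = Finset.univ.sup' Finset.univ_nonempty (A i) := by rw [← Finset.mul_sum, hw1, mul_one]

lemma inf_le_combo (A : Fin n → (∀ j, S j) → ℝ) (i : Fin n) (w : (∀ j, S j) → ℝ)
    (hw0 : ∀ t, 0 ≤ w t) (hw1 : ∑ t, w t = 1) :
    Finset.univ.inf' Finset.univ_nonempty (A i) ≤ ∑ t, A i t * w t := by
  calc Finset.univ.inf' Finset.univ_nonempty (A i)
      = ∑ t, Finset.univ.inf' Finset.univ_nonempty (A i) * w t := by
        rw [← Finset.mul_sum, hw1, mul_one]
    _ ≤ ∑ t, A i t * w t :=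
        Finset.sum_le_sum fun t _ =>
          mul_le_mul_of_nonneg_right (Finset.inf'_le (A i) (Finset.mem_univ t)) (hw0 t)

end helpers

/-- If the mixed strategy profile `x` is a Nash equilibrium, then there
exist `ū^i`, `u^i_s`, `r^i_s`, `g^i_s` and binary `b^i_s` satisfying the MIMLP3 constraints
whose objective value `∑ᵢ ∑_{s ∈ S_i} (g^i_s − (1 − b^i_s))` equals `0`. -/
theorem nash_gives_mimlp3_optimal
    (n : ℕ) (hn : 2 ≤ n) (S : Fin n → Type)
    [∀ i, Fintype (S i)] [∀ i, Nonempty (S i)] [∀ i, DecidableEq (S i)]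
    (A : Fin n → (∀ j, S j) → ℝ)
    (x : ∀ i, S i → ℝ)
    (hx0 : ∀ i s, 0 ≤ x i s) (hx1 : ∀ i, ∑ s, x i s = 1)
    (hNash : ∀ (i : Fin n) (y : S i → ℝ), (∀ s, 0 ≤ y s) → ∑ s, y s = 1 →
      expPayoff A (Function.update x i y) i ≤ expPayoff A x i)
    :
    ∃ (ubar : Fin n → ℝ) (u r g b : ∀ i, S i → ℝ),
      (∀ (i : Fin n) (s : S i),
        (b i s = 0 ∨ b i s = 1) ∧
        u i s = purePayoff A x i s ∧
        u i s ≤ ubar i ∧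
        r i s = ubar i - u i s ∧
        0 ≤ r i s ∧
        r i s ≤ payoffRange A i * b i s ∧
        x i s ≤ g i s ∧
        1 - b i s ≤ g i s) ∧
      ∑ i, ∑ s, (g i s - (1 - b i s)) = 0 := by
  classical
  -- every pure strategy payoff is at most the equilibrium payoff
  have hle : ∀ (i : Fin n) (s : S i), purePayoff A x i s ≤ expPayoff A x i := by
    intro i s
    have h := hNash i (fun a => if a = s then 1 else 0)
      (fun a => by positivity) (by simp)
    rw [expPayoff_update] at h
    simpa [ite_mul, Finset.sum_ite_eq'] using h
  -- support strategies achieve the equilibrium payoff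
  have heq : ∀ (i : Fin n) (s : S i), x i s ≠ 0 → purePayoff A x i s = expPayoff A x i := by
    intro i s hs
    have hsum : ∑ a, x i a * (expPayoff A x i - purePayoff A x i a) = 0 := by
      simp_rw [mul_sub]
      rw [Finset.sum_sub_distrib, ← Finset.sum_mul, hx1 i, one_mul,
        ← expPayoff_eq_sum, sub_self]
    have hterm := (Finset.sum_eq_zero_iff_of_nonneg
      (fun a _ => mul_nonneg (hx0 i a) (sub_nonneg.2 (hle i a)))).1 hsum s (Finset.mem_univ s)
    rcases mul_eq_zero.1 hterm with h | h
    · exact absurd h hs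
    · linarith [sub_eq_zero.1 h]
  -- payoff bounds
  have hub : ∀ i : Fin n, expPayoff A x i ≤ Finset.univ.sup' Finset.univ_nonempty (A i) := by
    intro i
    exact combo_le_sup A i _ (fun t => Finset.prod_nonneg fun j _ => hx0 j (t j))
      (full_weight_sum x hx1)
  have hlb : ∀ (i : Fin n) (s : S i),
      Finset.univ.inf' Finset.univ_nonempty (A i) ≤ purePayoff A x i s := by
    intro i s
    rw [purePayoff_eq]
    refine inf_le_combo A i _ (fun t => ?_) (weight_sum x hx1 i s)
    split
    · exact Finset.prod_nonneg fun j _ => hx0 j (t j)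
    · exact le_rfl
  have hx_le_one : ∀ (i : Fin n) (s : S i), x i s ≤ 1 := by
    intro i s
    rw [← hx1 i]
    exact Finset.single_le_sum (fun a _ => hx0 i a) (Finset.mem_univ s)
  refine ⟨fun i => expPayoff A x i, fun i s => purePayoff A x i s,
    fun i s => expPayoff A x i - purePayoff A x i s,
    fun i s => if x i s = 0 then 0 else 1,
    fun i s => if x i s = 0 then 1 else 0, ?_, ?_⟩
  · intro i s
    by_cases h : x i s = 0
    · simp only [if_pos h]
      refine ⟨Or.inr (by trivial), by trivial, hle i s, by trivial, sub_nonneg.2 (hle i s), ?_, h.le, by norm_num⟩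
      rw [mul_one, payoffRange]
      have := hub i
      have := hlb i s
      linarith
    · simp only [if_neg h]
      have he := heq i s h
      exact ⟨Or.inl (by trivial), by trivial, hle i s, by trivial, sub_nonneg.2 (hle i s),
        by rw [he]; simp, hx_le_one i s, by norm_num⟩
  · apply Finset.sum_eq_zero
    intro i _
    apply Finset.sum_eq_zero
    intro s _
    by_cases h : x i s = 0 <;> simp [h]
end
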